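/- Let 0 < ε ≤ 1 and let u, v ∈ L²(ℝ) with u frequency-supported in {|ξ| ≥ ε^{-1}} and v frequency-supported in {|ξ| ≤ ε^{-1}/8} with v ∈ L^∞. Then ‖u ∂_x v‖_{L²} ≤ ε^{-1} ‖u‖_{L²} ‖v‖_{L^∞}. -/

import Mathlib

open MeasureTheory
open scoped FourierTransform ENNReal

open Real
open scoped FourierTransform

set_option maxHeartbeats 1000000

lemma stmt6_aux_cos_sum (x : ℝ) (hx : x ∈ Set.Icc (0:ℝ) 1) :
    HasSum (fun n : ℕ => 1 / (n : ℝ) ^ 2 * Real.cos (2 * π * n * x))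
      (π ^ 2 * (x ^ 2 - x + 1/6)) := by
  have h := hasSum_one_div_nat_pow_mul_cos (k := 1) one_ne_zero hx
  have e2 : (Polynomial.map (algebraMap ℚ ℝ) (Polynomial.bernoulli 2)).eval x
      = x ^ 2 - x + 1/6 := by
    simp [Polynomial.bernoulli, Finset.sum_range_succ, bernoulli, bernoulli'_two]
    ring
  rw [e2] at h
  convert h using 2 <;> norm_num <;> ring

set_option maxHeartbeats 1000000 in
lemma odd_stmt6_aux_cos_sum {x : ℝ} (hx : x ∈ Set.Icc (0:ℝ) (1/2)) :
    HasSum (fun k : ℕ => 1 / (2*(k:ℝ)+1) ^ 2 * Real.cos (2 * π * (2*(k:ℝ)+1) * x))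
      (π ^ 2 / 8 - π ^ 2 * x / 2) := by
  obtain ⟨hx0, hx2⟩ := hx
  have h1 : HasSum (fun n : ℕ => 1 / (n : ℝ) ^ 2 * Real.cos (2 * π * n * x))
      (π ^ 2 * (x ^ 2 - x + 1/6)) := stmt6_aux_cos_sum x ⟨hx0, by linarith⟩
  have h2 : HasSum (fun n : ℕ => 1 / (n : ℝ) ^ 2 * Real.cos (2 * π * n * (2*x)))
      (π ^ 2 * ((2*x) ^ 2 - (2*x) + 1/6)) := stmt6_aux_cos_sum (2*x) ⟨by linarith, by linarith⟩
  have hEven : HasSum (fun k : ℕ => (fun n : ℕ => 1 / (n : ℝ) ^ 2 * Real.cos (2 * π * n * x)) (2*k))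
      ((1/4) * (π ^ 2 * ((2*x) ^ 2 - (2*x) + 1/6))) := by
    refine (h2.mul_left (1/4)).congr_fun fun k => ?_
    rcases Nat.eq_zero_or_pos k with rfl | hk
    · norm_num
    · push_cast
      rw [mul_pow]
      have : (2:ℝ) * π * (2*k) * x = 2 * π * k * (2*x) := by ring
      rw [this]
      ring
  have hodd : Summable ((fun n : ℕ => 1 / (n : ℝ) ^ 2 * Real.cos (2 * π * n * x)) ∘ (fun k => 2*k+1)) :=
    h1.summable.comp_injective (fun a b h => by omega)
  obtain ⟨b, hb⟩ := hodd
  have huniq := (HasSum.even_add_odd hEven hb).unique h1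
  have hbval : b = π ^ 2 / 8 - π ^ 2 * x / 2 := by
    have hb2 := eq_sub_of_add_eq' huniq
    rw [hb2]; ring
  rw [hbval] at hb
  refine hb.congr_fun fun k => ?_
  simp only [Function.comp_apply]
  push_cast
  ring_nf

lemma stmt6_aux_basel_odd : HasSum (fun k : ℕ => 1 / (2*(k:ℝ)+1) ^ 2) (π ^ 2 / 8) := by
  have h := odd_stmt6_aux_cos_sum (x := 0) ⟨le_refl 0, by norm_num⟩
  simpa using h

lemma stmt6_aux_sine_rep {M ξ : ℝ} (hM : 0 < M) (hξ : |ξ| ≤ M) :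
    HasSum (fun k : ℕ => (-1:ℝ)^k / (2*(k:ℝ)+1) ^ 2
        * Real.sin (2 * π * (ξ * ((2*(k:ℝ)+1)/(4*M)))))
      (π ^ 2 * ξ / (8 * M)) := by
  obtain ⟨hξ1, hξ2⟩ := abs_le.mp hξ
  have h4M : (0:ℝ) < 4*M := by linarith
  have l1 : -(1/4:ℝ) ≤ ξ/(4*M) := by
    rw [neg_le, ← neg_div, div_le_iff₀ h4M]; linarith
  have l2 : ξ/(4*M) ≤ 1/4 := by rw [div_le_iff₀ h4M]; linarith
  have h := odd_stmt6_aux_cos_sum (x := ξ/(4*M) + 1/4) ⟨by linarith, by linarith⟩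
  have hval : -(π ^ 2 / 8 - π ^ 2 * (ξ/(4*M) + 1/4) / 2) = π ^ 2 * ξ / (8 * M) := by
    field_simp
    ring
  rw [← hval]
  refine h.neg.congr_fun fun k => ?_
  have harg : 2 * π * (2*(k:ℝ)+1) * (ξ/(4*M) + 1/4)
      = (2 * π * (ξ * ((2*(k:ℝ)+1)/(4*M))) + π/2) + (k:ℝ)*π := by
    field_simp
    ring
  have hcos : Real.cos ((k:ℝ)*π) = (-1:ℝ)^k := by
    have := Real.cos_int_mul_pi_sub 0 (k:ℤ)
    simpa using this
  rw [harg, Real.cos_add, hcos, Real.sin_nat_mul_pi, Real.cos_add_pi_div_two]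
  ring

lemma stmt6_aux_exp_rep {M ξ : ℝ} (hM : 0 < M) (hξ : |ξ| ≤ M) :
    HasSum (fun k : ℕ =>
        ((8*M/π * ((-1:ℝ)^k / (2*(k:ℝ)+1) ^ 2) : ℝ) : ℂ) *
          (Complex.exp ((2 * π * (ξ * ((2*(k:ℝ)+1)/(4*M))) : ℝ) * Complex.I)
            - Complex.exp ((-(2 * π * (ξ * ((2*(k:ℝ)+1)/(4*M)))) : ℝ) * Complex.I)))
      (2 * π * Complex.I * ξ) := by
  have h0 := (stmt6_aux_sine_rep hM hξ).mapL Complex.ofRealCLM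
  have h1 := h0.mul_left ((16*(M:ℂ)/(π:ℂ)) * Complex.I)
  have hπ : (π:ℂ) ≠ 0 := Complex.ofReal_ne_zero.mpr Real.pi_ne_zero
  have hMne : (M:ℂ) ≠ 0 := Complex.ofReal_ne_zero.mpr hM.ne'
  have h2 : HasSum (fun k : ℕ =>
        ((8*M/π * ((-1:ℝ)^k / (2*(k:ℝ)+1) ^ 2) : ℝ) : ℂ) *
          (Complex.exp ((2 * π * (ξ * ((2*(k:ℝ)+1)/(4*M))) : ℝ) * Complex.I)
            - Complex.exp ((-(2 * π * (ξ * ((2*(k:ℝ)+1)/(4*M)))) : ℝ) * Complex.I)))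
      ((16*(M:ℂ)/(π:ℂ)) * Complex.I * Complex.ofRealCLM (π ^ 2 * ξ / (8 * M))) := by
    refine h1.congr_fun fun k => ?_
    set A : ℝ := 2 * π * (ξ * ((2*(k:ℝ)+1)/(4*M))) with hA
    have e1 := Complex.exp_mul_I (x := (A:ℂ))
    have e2 := Complex.exp_mul_I (x := (-(A:ℂ)))
    simp only [Complex.ofRealCLM_apply]
    push_cast
    rw [e1, e2, Complex.cos_neg, Complex.sin_neg]
    ring
  convert h2 using 1
  simp only [Complex.ofRealCLM_apply]
  push_cast
  field_simp
  ring

open MeasureTheory in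
lemma stmt6_aux_cont_bdd {v : ℝ → ℂ} (hv : Continuous v)
    (hfin : eLpNorm v ⊤ volume ≠ ⊤) (y : ℝ) :
    ‖v y‖ ≤ (eLpNorm v ⊤ volume).toReal := by
  set C := (eLpNorm v ⊤ volume).toReal with hC
  by_contra hcon
  push_neg at hcon
  have hU : IsOpen {x : ℝ | C < ‖v x‖} := isOpen_lt continuous_const hv.norm
  have hpos : 0 < volume {x : ℝ | C < ‖v x‖} :=
    hU.measure_pos volume ⟨y, hcon⟩
  have hae : ∀ᵐ x ∂(volume : Measure ℝ), ‖v x‖ ≤ C := by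
    have h1 : ∀ᵐ x ∂(volume : Measure ℝ), (‖v x‖₊ : ENNReal) ≤ eLpNormEssSup v volume :=
      ae_le_eLpNormEssSup
    filter_upwards [h1] with x hx
    have h2 : ((‖v x‖₊ : ENNReal)).toReal ≤ (eLpNormEssSup v volume).toReal := by
      apply ENNReal.toReal_mono _ hx
      rwa [← eLpNorm_exponent_top]
    simpa [eLpNorm_exponent_top, hC] using h2
  have hzero : volume {x : ℝ | C < ‖v x‖} = 0 := by
    have := hae
    rw [MeasureTheory.ae_iff] at this
    convert this using 2
    ext x
    simp [not_le]
  rw [hzero] at hpos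
  exact lt_irrefl 0 hpos

open MeasureTheory
open scoped FourierTransform
open scoped ENNReal


/-- High–low interaction estimate: if u is frequency-supported in {|ξ| ≥ ε⁻¹}
and v is frequency-supported in {|ξ| ≤ ε⁻¹/8} with v ∈ L^∞, then
‖u ∂ₓv‖_{L²} ≤ ε⁻¹ ‖u‖_{L²} ‖v‖_{L^∞}. -/
theorem stmt_6 (ε : ℝ) (hε0 : 0 < ε) (hε1 : ε ≤ 1) (u v : ℝ → ℂ)
    (hu2 : MemLp u 2 volume) (hui : Integrable u)
    (hvinf : MemLp v ⊤ volume) (hvi : Integrable v) (hvd : Differentiable ℝ v)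
    (hsu : ∀ ξ : ℝ, |ξ| < ε⁻¹ → 𝓕 u ξ = 0)
    (hsv : ∀ ξ : ℝ, ε⁻¹ / 8 < |ξ| → 𝓕 v ξ = 0) :
    eLpNorm (fun x => u x * deriv v x) 2 volume
      ≤ ENNReal.ofReal ε⁻¹ * eLpNorm u 2 volume * eLpNorm v ⊤ volume := by
  set M : ℝ := ε⁻¹/8 with hMdef
  have hM : 0 < M := by positivity
  set g : ℝ → ℂ := 𝓕 v with hgdef
  have hgc : Continuous g :=
    VectorFourier.fourierIntegral_continuous Real.continuous_fourierChar
      (by exact continuous_inner) hvi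
  have hgs : ∀ ξ : ℝ, M < |ξ| → g ξ = 0 := fun ξ h => hsv ξ h
  have hgcs : HasCompactSupport g := by
    apply HasCompactSupport.intro (isCompact_Icc (a := -M) (b := M))
    intro ξ hξ
    apply hgs
    rcases not_and_or.mp (fun h => hξ (Set.mem_Icc.mpr h)) with h | h
    · rw [abs_of_neg (by linarith [not_le.mp h])]; linarith [not_le.mp h]
    · rw [abs_of_pos (by linarith [not_le.mp h])]; linarith [not_le.mp h]
  have hgi : Integrable g := hgc.integrable_of_hasCompactSupport hgcs
  have hvcont : Continuous v := hvd.continuous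
  have hinv : 𝓕⁻ g = v := hvcont.fourierInv_fourier_eq hvi hgi
  have hinv' : ∀ y : ℝ, v y = ∫ ξ : ℝ, Complex.exp ((2 * π * (ξ * y) : ℝ) * Complex.I) * g ξ := by
    intro y
    rw [← hinv, Real.fourierInv_eq']
    simp [RCLike.inner_apply, conj_trivial, smul_eq_mul]
    simp_rw [mul_comm (y:ℂ)]
  have hmod : ∀ y : ℝ, Integrable
      (fun ξ : ℝ => Complex.exp ((2 * π * (ξ * y) : ℝ) * Complex.I) * g ξ) := by
    intro y
    refine hgi.bdd_mul (c := 1) ?_ (Filter.Eventually.of_forall fun ξ => ?_)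
    · exact (Complex.continuous_exp.comp (by fun_prop)).aestronglyMeasurable
    · rw [Complex.norm_exp_ofReal_mul_I]
  have hξg : Integrable (fun ξ : ℝ => (2*π*Complex.I*ξ) * g ξ) := by
    have : Continuous (fun ξ : ℝ => (2*π*Complex.I*ξ) * g ξ) := by fun_prop
    apply this.integrable_of_hasCompactSupport
    apply HasCompactSupport.intro (isCompact_Icc (a := -M) (b := M))
    intro ξ hξ
    have : g ξ = 0 := by
      apply hgs
      rcases not_and_or.mp (fun h => hξ (Set.mem_Icc.mpr h)) with h | h
      · rw [abs_of_neg (by linarith [not_le.mp h])]; linarith [not_le.mp h]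
      · rw [abs_of_pos (by linarith [not_le.mp h])]; linarith [not_le.mp h]
    simp [this]
  have hD : ∀ x : ℝ, deriv v x
      = ∫ ξ : ℝ, (2*π*Complex.I*ξ) * g ξ * Complex.exp ((2 * π * (ξ * x) : ℝ) * Complex.I) := by
    intro x
    have hsmul : Integrable (fun ξ : ℝ => ξ • g ξ) := by
      have : Continuous (fun ξ : ℝ => ξ • g ξ) := by fun_prop
      apply this.integrable_of_hasCompactSupport
      apply HasCompactSupport.intro (isCompact_Icc (a := -M) (b := M))
      intro ξ hξ
      have : g ξ = 0 := by
        apply hgs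
        rcases not_and_or.mp (fun h => hξ (Set.mem_Icc.mpr h)) with h | h
        · rw [abs_of_neg (by linarith [not_le.mp h])]; linarith [not_le.mp h]
        · rw [abs_of_pos (by linarith [not_le.mp h])]; linarith [not_le.mp h]
      simp [this]
    have hd1 := Real.hasDerivAt_fourier hgi hsmul (-x)
    have hd2 : HasDerivAt (fun y : ℝ => 𝓕 g (-y))
        ((-1 : ℝ) • (𝓕 (fun ξ : ℝ => (-2 * π * Complex.I * ξ) • g ξ) (-x))) x :=
      hd1.scomp x (hasDerivAt_neg x)
    have hveq : v = fun y : ℝ => 𝓕 g (-y) := by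
      funext y
      rw [← hinv, Real.fourierInv_eq_fourier_neg]
    rw [hveq]
    rw [hd2.deriv, neg_one_smul ℝ]
    rw [Real.fourier_eq']
    rw [← integral_neg]
    congr 1
    funext ξ
    have harg : (-2 * π * (ξ * -x) : ℝ) = (2 * π * (ξ * x) : ℝ) := by ring
    simp only [RCLike.inner_apply, conj_trivial, smul_eq_mul, harg]
    push_cast
    ring
  -- pointwise series representation of the integrand
  have hFsum : ∀ x ξ : ℝ, HasSum
      (fun k : ℕ => ((8*M/π * ((-1:ℝ)^k / (2*(k:ℝ)+1) ^ 2) : ℝ) : ℂ) *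
          (Complex.exp ((2 * π * (ξ * ((2*(k:ℝ)+1)/(4*M))) : ℝ) * Complex.I)
            - Complex.exp ((-(2 * π * (ξ * ((2*(k:ℝ)+1)/(4*M)))) : ℝ) * Complex.I))
        * (g ξ * Complex.exp ((2 * π * (ξ * x) : ℝ) * Complex.I)))
      ((2*π*Complex.I*(ξ:ℂ)) * (g ξ * Complex.exp ((2 * π * (ξ * x) : ℝ) * Complex.I))) := by
    intro x ξ
    rcases le_or_gt |ξ| M with hle | hgt
    · exact (stmt6_aux_exp_rep hM hle).mul_right _
    · have hg0 : g ξ = 0 := hgs ξ hgt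
      simp only [hg0, mul_zero, zero_mul]
      exact hasSum_zero
  have hcsum : HasSum (fun k : ℕ => 8*M/π * (1 / (2*(k:ℝ)+1) ^ 2)) (π * M) := by
    have h := stmt6_aux_basel_odd.mul_left (8*M/π)
    rw [show π * M = 8*M/π * (π^2/8) by rw [div_mul_div_comm, eq_div_iff (by positivity)]; ring]
    exact h
  have hexp_add : ∀ a b : ℝ, Complex.exp ((a : ℝ) * Complex.I) * Complex.exp ((b : ℝ) * Complex.I)
      = Complex.exp (((a + b : ℝ) : ℂ) * Complex.I) := by
    intro a b
    rw [← Complex.exp_add]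
    congr 1
    push_cast
    ring
  have hrep : ∀ x : ℝ, deriv v x = ∑' k : ℕ,
      (8*M/π * ((-1:ℝ)^k / (2*(k:ℝ)+1) ^ 2)) •
        (v (x + (2*(k:ℝ)+1)/(4*M)) - v (x - (2*(k:ℝ)+1)/(4*M))) := by
    intro x
    rw [hD x]
    have hintegrand : (fun ξ : ℝ => (2*π*Complex.I*(ξ:ℂ)) * g ξ
          * Complex.exp ((2 * π * (ξ * x) : ℝ) * Complex.I))
        = fun ξ : ℝ => ∑' k : ℕ,
          ((8*M/π * ((-1:ℝ)^k / (2*(k:ℝ)+1) ^ 2) : ℝ) : ℂ) *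
            (Complex.exp ((2 * π * (ξ * ((2*(k:ℝ)+1)/(4*M))) : ℝ) * Complex.I)
              - Complex.exp ((-(2 * π * (ξ * ((2*(k:ℝ)+1)/(4*M)))) : ℝ) * Complex.I))
          * (g ξ * Complex.exp ((2 * π * (ξ * x) : ℝ) * Complex.I)) := by
      funext ξ
      rw [mul_assoc]
      exact ((hFsum x ξ).tsum_eq).symm
    rw [hintegrand]
    rw [MeasureTheory.integral_tsum ?meas ?bdd]
    case meas =>
      intro k
      apply Continuous.aestronglyMeasurable
      fun_prop
    case bdd =>
      have hK : ∫⁻ ξ : ℝ, ‖g ξ‖₊ ∂volume < ⊤ := hgi.2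
      have hle : ∀ k : ℕ, ∫⁻ ξ : ℝ, ‖((8*M/π * ((-1:ℝ)^k / (2*(k:ℝ)+1) ^ 2) : ℝ) : ℂ) *
            (Complex.exp ((2 * π * (ξ * ((2*(k:ℝ)+1)/(4*M))) : ℝ) * Complex.I)
              - Complex.exp ((-(2 * π * (ξ * ((2*(k:ℝ)+1)/(4*M)))) : ℝ) * Complex.I))
          * (g ξ * Complex.exp ((2 * π * (ξ * x) : ℝ) * Complex.I))‖₊ ∂volume
          ≤ ENNReal.ofReal (2 * (8*M/π * (1 / (2*(k:ℝ)+1) ^ 2))) * ∫⁻ ξ : ℝ, ‖g ξ‖₊ ∂volume := by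
        intro k
        rw [← MeasureTheory.lintegral_const_mul' _ _ ENNReal.ofReal_ne_top]
        apply MeasureTheory.lintegral_mono
        intro ξ
        have hnorm : ‖((8*M/π * ((-1:ℝ)^k / (2*(k:ℝ)+1) ^ 2) : ℝ) : ℂ) *
            (Complex.exp ((2 * π * (ξ * ((2*(k:ℝ)+1)/(4*M))) : ℝ) * Complex.I)
              - Complex.exp ((-(2 * π * (ξ * ((2*(k:ℝ)+1)/(4*M)))) : ℝ) * Complex.I))
          * (g ξ * Complex.exp ((2 * π * (ξ * x) : ℝ) * Complex.I))‖
            ≤ 2 * (8*M/π * (1 / (2*(k:ℝ)+1) ^ 2)) * ‖g ξ‖ := by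
          rw [norm_mul, norm_mul, norm_mul,
            Complex.norm_exp_ofReal_mul_I, mul_one, Complex.norm_real, Real.norm_eq_abs]
          have habs : |8*M/π * ((-1:ℝ)^k / (2*(k:ℝ)+1) ^ 2)| = 8*M/π * (1 / (2*(k:ℝ)+1) ^ 2) := by
            rw [abs_mul]
            congr 1
            · exact abs_of_pos (by positivity)
            · rw [abs_div, abs_pow, abs_neg, abs_one, one_pow,
                abs_of_pos (by positivity : (0:ℝ) < (2*(k:ℝ)+1) ^ 2)]
          rw [habs]
          have hsub : ‖Complex.exp ((2 * π * (ξ * ((2*(k:ℝ)+1)/(4*M))) : ℝ) * Complex.I)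
              - Complex.exp ((-(2 * π * (ξ * ((2*(k:ℝ)+1)/(4*M)))) : ℝ) * Complex.I)‖ ≤ 2 := by
            refine (norm_sub_le _ _).trans ?_
            rw [Complex.norm_exp_ofReal_mul_I,
              Complex.norm_exp_ofReal_mul_I]
            norm_num
          calc 8*M/π * (1 / (2*(k:ℝ)+1) ^ 2) * ‖Complex.exp ((2 * π * (ξ * ((2*(k:ℝ)+1)/(4*M))) : ℝ) * Complex.I)
              - Complex.exp ((-(2 * π * (ξ * ((2*(k:ℝ)+1)/(4*M)))) : ℝ) * Complex.I)‖ * ‖g ξ‖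
              ≤ 8*M/π * (1 / (2*(k:ℝ)+1) ^ 2) * 2 * ‖g ξ‖ := by
                apply mul_le_mul_of_nonneg_right _ (norm_nonneg _)
                exact mul_le_mul_of_nonneg_left hsub (by positivity)
            _ = 2 * (8*M/π * (1 / (2*(k:ℝ)+1) ^ 2)) * ‖g ξ‖ := by ring
        calc (‖_ * _ * (g ξ * _)‖₊ : ℝ≥0∞)
            = ENNReal.ofReal ‖((8*M/π * ((-1:ℝ)^k / (2*(k:ℝ)+1) ^ 2) : ℝ) : ℂ) *
            (Complex.exp ((2 * π * (ξ * ((2*(k:ℝ)+1)/(4*M))) : ℝ) * Complex.I)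
              - Complex.exp ((-(2 * π * (ξ * ((2*(k:ℝ)+1)/(4*M)))) : ℝ) * Complex.I))
          * (g ξ * Complex.exp ((2 * π * (ξ * x) : ℝ) * Complex.I))‖ :=
              (ofReal_norm _).symm
          _ ≤ ENNReal.ofReal (2 * (8*M/π * (1 / (2*(k:ℝ)+1) ^ 2)) * ‖g ξ‖) :=
              ENNReal.ofReal_le_ofReal hnorm
          _ = ENNReal.ofReal (2 * (8*M/π * (1 / (2*(k:ℝ)+1) ^ 2))) * ‖g ξ‖₊ := by
              rw [ENNReal.ofReal_mul (by positivity)]; exact congrArg _ (ofReal_norm _)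
      refine ne_of_lt (lt_of_le_of_lt (ENNReal.tsum_le_tsum hle) ?_)
      rw [ENNReal.tsum_mul_right]
      apply ENNReal.mul_lt_top _ hK
      apply lt_of_le_of_ne le_top
      rw [← ENNReal.ofReal_tsum_of_nonneg (fun k => by positivity)
        ((hcsum.summable).mul_left 2)]
      exact ENNReal.ofReal_ne_top
    · congr 1
      funext k
      have hptw : (fun ξ : ℝ =>
          ((8*M/π * ((-1:ℝ)^k / (2*(k:ℝ)+1) ^ 2) : ℝ) : ℂ) *
            (Complex.exp ((2 * π * (ξ * ((2*(k:ℝ)+1)/(4*M))) : ℝ) * Complex.I)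
              - Complex.exp ((-(2 * π * (ξ * ((2*(k:ℝ)+1)/(4*M)))) : ℝ) * Complex.I))
          * (g ξ * Complex.exp ((2 * π * (ξ * x) : ℝ) * Complex.I)))
          = fun ξ : ℝ => ((8*M/π * ((-1:ℝ)^k / (2*(k:ℝ)+1) ^ 2) : ℝ) : ℂ) *
            ((Complex.exp ((2 * π * (ξ * (x + (2*(k:ℝ)+1)/(4*M))) : ℝ) * Complex.I) * g ξ)
              - (Complex.exp ((2 * π * (ξ * (x - (2*(k:ℝ)+1)/(4*M))) : ℝ) * Complex.I) * g ξ)) := by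
        funext ξ
        have e1 := hexp_add (2 * π * (ξ * ((2*(k:ℝ)+1)/(4*M)))) (2 * π * (ξ * x))
        have e2 := hexp_add (-(2 * π * (ξ * ((2*(k:ℝ)+1)/(4*M))))) (2 * π * (ξ * x))
        have a1 : 2 * π * (ξ * ((2*(k:ℝ)+1)/(4*M))) + 2 * π * (ξ * x)
            = 2 * π * (ξ * (x + (2*(k:ℝ)+1)/(4*M))) := by ring
        have a2 : -(2 * π * (ξ * ((2*(k:ℝ)+1)/(4*M)))) + 2 * π * (ξ * x)
            = 2 * π * (ξ * (x - (2*(k:ℝ)+1)/(4*M))) := by ring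
        rw [a1] at e1
        rw [a2] at e2
        linear_combination (((8*M/π * ((-1:ℝ)^k / (2*(k:ℝ)+1) ^ 2) : ℝ) : ℂ) * g ξ) * e1
          - (((8*M/π * ((-1:ℝ)^k / (2*(k:ℝ)+1) ^ 2) : ℝ) : ℂ) * g ξ) * e2
      rw [hptw]
      rw [MeasureTheory.integral_const_mul]
      rw [MeasureTheory.integral_sub (hmod (x + (2*(k:ℝ)+1)/(4*M))) (hmod (x - (2*(k:ℝ)+1)/(4*M)))]
      rw [← hinv' (x + (2*(k:ℝ)+1)/(4*M)), ← hinv' (x - (2*(k:ℝ)+1)/(4*M))]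
      rw [Complex.real_smul]
  -- pointwise bound on the derivative
  set C : ℝ := (eLpNorm v ⊤ volume).toReal with hCdef
  have hC0 : 0 ≤ C := ENNReal.toReal_nonneg
  have hvbd : ∀ y : ℝ, ‖v y‖ ≤ C := fun y => stmt6_aux_cont_bdd hvcont hvinf.2.ne y
  have hdbd : ∀ x : ℝ, ‖deriv v x‖ ≤ ε⁻¹ * C := by
    intro x
    rw [hrep x]
    have hterm : ∀ k : ℕ, ‖(8*M/π * ((-1:ℝ)^k / (2*(k:ℝ)+1) ^ 2)) •
        (v (x + (2*(k:ℝ)+1)/(4*M)) - v (x - (2*(k:ℝ)+1)/(4*M)))‖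
        ≤ 8*M/π * (1 / (2*(k:ℝ)+1) ^ 2) * (2*C) := by
      intro k
      rw [norm_smul, Real.norm_eq_abs]
      have habs : |8*M/π * ((-1:ℝ)^k / (2*(k:ℝ)+1) ^ 2)| = 8*M/π * (1 / (2*(k:ℝ)+1) ^ 2) := by
        rw [abs_mul]
        congr 1
        · exact abs_of_pos (by positivity)
        · rw [abs_div, abs_pow, abs_neg, abs_one, one_pow,
            abs_of_pos (by positivity : (0:ℝ) < (2*(k:ℝ)+1) ^ 2)]
      rw [habs]
      apply mul_le_mul_of_nonneg_left _ (by positivity)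
      calc ‖v (x + (2*(k:ℝ)+1)/(4*M)) - v (x - (2*(k:ℝ)+1)/(4*M))‖
          ≤ ‖v (x + (2*(k:ℝ)+1)/(4*M))‖ + ‖v (x - (2*(k:ℝ)+1)/(4*M))‖ := norm_sub_le _ _
        _ ≤ C + C := add_le_add (hvbd _) (hvbd _)
        _ = 2*C := by ring
    have hbsum : HasSum (fun k : ℕ => 8*M/π * (1 / (2*(k:ℝ)+1) ^ 2) * (2*C)) (π*M*(2*C)) :=
      hcsum.mul_right (2*C)
    have hsummable : Summable (fun k : ℕ => ‖(8*M/π * ((-1:ℝ)^k / (2*(k:ℝ)+1) ^ 2)) •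
        (v (x + (2*(k:ℝ)+1)/(4*M)) - v (x - (2*(k:ℝ)+1)/(4*M)))‖) :=
      Summable.of_nonneg_of_le (fun k => norm_nonneg _) hterm hbsum.summable
    calc ‖∑' k : ℕ, (8*M/π * ((-1:ℝ)^k / (2*(k:ℝ)+1) ^ 2)) •
        (v (x + (2*(k:ℝ)+1)/(4*M)) - v (x - (2*(k:ℝ)+1)/(4*M)))‖
        ≤ ∑' k : ℕ, ‖(8*M/π * ((-1:ℝ)^k / (2*(k:ℝ)+1) ^ 2)) •
          (v (x + (2*(k:ℝ)+1)/(4*M)) - v (x - (2*(k:ℝ)+1)/(4*M)))‖ :=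
          norm_tsum_le_tsum_norm hsummable
      _ ≤ ∑' k : ℕ, 8*M/π * (1 / (2*(k:ℝ)+1) ^ 2) * (2*C) :=
          Summable.tsum_le_tsum hterm hsummable hbsum.summable
      _ = π*M*(2*C) := hbsum.tsum_eq
      _ ≤ ε⁻¹ * C := by
          have hε : ε⁻¹ = 8*M := by rw [hMdef]; ring
          rw [hε]
          nlinarith [Real.pi_le_four, mul_nonneg (mul_nonneg hM.le hC0)
            (sub_nonneg.mpr Real.pi_le_four)]
  -- conclude
  have hpt : ∀ x : ℝ, ‖u x * deriv v x‖ ≤ ‖((ε⁻¹ * C) • u) x‖ := by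
    intro x
    rw [Pi.smul_apply, norm_smul, Real.norm_eq_abs,
      abs_of_nonneg (by positivity : (0:ℝ) ≤ ε⁻¹*C), norm_mul]
    rw [mul_comm ‖u x‖ ‖deriv v x‖]
    exact mul_le_mul_of_nonneg_right (hdbd x) (norm_nonneg _)
  calc eLpNorm (fun x => u x * deriv v x) 2 volume
      ≤ eLpNorm ((ε⁻¹ * C) • u) 2 volume := eLpNorm_mono hpt
    _ = ‖ε⁻¹ * C‖ₑ * eLpNorm u 2 volume := eLpNorm_const_smul _ _ _ _
    _ = ENNReal.ofReal ε⁻¹ * eLpNorm u 2 volume * eLpNorm v ⊤ volume := by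
        rw [Real.enorm_eq_ofReal (by positivity : (0:ℝ) ≤ ε⁻¹*C),
          ENNReal.ofReal_mul (by positivity : (0:ℝ) ≤ ε⁻¹), hCdef,
          ENNReal.ofReal_toReal hvinf.2.ne]
        ring
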